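/- arXiv:math/0612488 — 2 statements merged into one kernel-verified Lean document; each statement's English description precedes it below -/
import Mathlib

section
/- Suppose ε < 1/2 and ε_{n−1} < ε_n for all n ≥ 2. Then for every n ≥ 2 the boundaries satisfy the explicit bounds U_n ≤ nα + Δ_n + 1 and L_n ≥ nα − Δ_n − 1, where Δ_n = √(−n·log(ε_n − ε_{n−1})/2). -/
open MeasureTheory ProbabilityTheory Filter Asymptotics
open scoped ENNReal

namespace SeqMC

variable {Ω : Type*} [MeasurableSpace Ω]

/-- Partial sums: `S n = X_1 + ⋯ + X_n`, where the i-th variable `X_i` is `X (i-1)`. -/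
def S (X : ℕ → Ω → ℕ) (n : ℕ) (ω : Ω) : ℕ := ∑ i ∈ Finset.range n, X i ω

/-- `X` is an i.i.d. Bernoulli(p) sequence under the probability measure `P`. -/
structure IsBernoulliSeq (P : Measure Ω) (p : ℝ) (X : ℕ → Ω → ℕ) : Prop where
  isProb : IsProbabilityMeasure P
  meas : ∀ i, Measurable (X i)
  bdd : ∀ i ω, X i ω ≤ 1
  indep : iIndepFun X P
  bern : ∀ i, P (X i ⁻¹' {1}) = ENNReal.ofReal p

/-- The walk stayed strictly between the boundaries at all steps `1 ≤ k ≤ n`, i.e. `τ > n`. -/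
def notStopped (X : ℕ → Ω → ℕ) (U L : ℕ → ℤ) (n : ℕ) (ω : Ω) : Prop :=
  ∀ k, 1 ≤ k → k ≤ n → L k < (S X k ω : ℤ) ∧ (S X k ω : ℤ) < U k

/-- The event `τ ≤ n` and `S_τ ≥ U_τ`. -/
def hitUpperBy (X : ℕ → Ω → ℕ) (U L : ℕ → ℤ) (n : ℕ) (ω : Ω) : Prop :=
  ∃ k, 1 ≤ k ∧ k ≤ n ∧ notStopped X U L (k - 1) ω ∧ U k ≤ (S X k ω : ℤ)

/-- The event `τ ≤ n` and `S_τ ≤ L_τ`. -/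
def hitLowerBy (X : ℕ → Ω → ℕ) (U L : ℕ → ℤ) (n : ℕ) (ω : Ω) : Prop :=
  ∃ k, 1 ≤ k ∧ k ≤ n ∧ notStopped X U L (k - 1) ω ∧ (S X k ω : ℤ) ≤ L k

/-- The recursively defined boundaries `(U_n, L_n)`: `U_1 = 2`, `L_1 = -1` and for `n ≥ 2`,
`U_n` is the least `j ∈ {1,2,…}` with `P_α(τ ≥ n, S_n ≥ j) + P_α(τ < n, S_τ ≥ U_τ) ≤ ε_n`,
`L_n` is the greatest `j ∈ ℤ` with `P_α(τ ≥ n, S_n ≤ j) + P_α(τ < n, S_τ ≤ L_τ) ≤ ε_n`.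
Here `Pα` is the measure `P_α` and `εs` the spending sequence. -/
noncomputable def bnd (Pα : Measure Ω) (X : ℕ → Ω → ℕ) (εs : ℕ → ℝ) : ℕ → ℤ × ℤ
  | 0 => (2, -1)
  | 1 => (2, -1)
  | n + 2 =>
      let U : ℕ → ℤ := fun k => if h : k < n + 2 then (bnd Pα X εs k).1 else 0
      let L : ℕ → ℤ := fun k => if h : k < n + 2 then (bnd Pα X εs k).2 else 0
      (sInf {j : ℤ | 1 ≤ j ∧
          Pα {ω | notStopped X U L (n + 1) ω ∧ j ≤ (S X (n + 2) ω : ℤ)} +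
            Pα {ω | hitUpperBy X U L (n + 1) ω} ≤ ENNReal.ofReal (εs (n + 2))},
       sSup {j : ℤ |
          Pα {ω | notStopped X U L (n + 1) ω ∧ (S X (n + 2) ω : ℤ) ≤ j} +
            Pα {ω | hitLowerBy X U L (n + 1) ω} ≤ ENNReal.ofReal (εs (n + 2))})
  termination_by n => n
  decreasing_by all_goals omega

/-- The upper boundary `U_n`. -/
noncomputable def Ub (Pα : Measure Ω) (X : ℕ → Ω → ℕ) (εs : ℕ → ℝ) (n : ℕ) : ℤ :=
  (bnd Pα X εs n).1

/-- The lower boundary `L_n`. -/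
noncomputable def Lb (Pα : Measure Ω) (X : ℕ → Ω → ℕ) (εs : ℕ → ℝ) (n : ℕ) : ℤ :=
  (bnd Pα X εs n).2

/-- The stopping time `τ = inf {k ≥ 1 : S_k ≥ U_k or S_k ≤ L_k}`, with `0` encoding `τ = ∞`. -/
noncomputable def tau (Pα : Measure Ω) (X : ℕ → Ω → ℕ) (εs : ℕ → ℝ) (ω : Ω) : ℕ :=
  sInf {k | 1 ≤ k ∧ ((S X k ω : ℤ) ≤ Lb Pα X εs k ∨ Ub Pα X εs k ≤ (S X k ω : ℤ))}

/-- `τ` as an extended nonneg real (`∞` when the algorithm never stops). -/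
noncomputable def tauE (Pα : Measure Ω) (X : ℕ → Ω → ℕ) (εs : ℕ → ℝ) (ω : Ω) : ℝ≥0∞ :=
  if tau Pα X εs ω = 0 then ⊤ else (tau Pα X εs ω : ℝ≥0∞)

/-- The event `τ < ∞` and `S_τ ≥ U_τ`. -/
def hitsUpper (Pα : Measure Ω) (X : ℕ → Ω → ℕ) (εs : ℕ → ℝ) (ω : Ω) : Prop :=
  tau Pα X εs ω ≠ 0 ∧ Ub Pα X εs (tau Pα X εs ω) ≤ (S X (tau Pα X εs ω) ω : ℤ)

/-- The event `τ < ∞` and `S_τ ≤ L_τ`. -/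
def hitsLower (Pα : Measure Ω) (X : ℕ → Ω → ℕ) (εs : ℕ → ℝ) (ω : Ω) : Prop :=
  tau Pα X εs ω ≠ 0 ∧ (S X (tau Pα X εs ω) ω : ℤ) ≤ Lb Pα X εs (tau Pα X εs ω)

/-- The estimator `p̂ = S_τ/τ` (`= α` if `τ = ∞`). -/
noncomputable def phat (Pα : Measure Ω) (X : ℕ → Ω → ℕ) (εs : ℕ → ℝ) (α : ℝ) (ω : Ω) : ℝ :=
  if tau Pα X εs ω = 0 then α
  else (S X (tau Pα X εs ω) ω : ℝ) / (tau Pα X εs ω)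


section ProofAux

open Real

variable {μ : Measure Ω} {α : ℝ} {X : ℕ → Ω → ℕ} {εs : ℕ → ℝ}

omit [MeasurableSpace Ω] in
lemma hoeff_bern {a : ℝ} (ha0 : 0 ≤ a) (ha1 : a ≤ 1) (t : ℝ) :
    (1 - a) + a * Real.exp t ≤ Real.exp (a * t + t ^ 2 / 8) := by
  set g : ℝ → ℝ := fun s => (1 - a) + a * Real.exp s with hg
  have hgpos : ∀ s, 0 < g s := by
    intro s
    rcases eq_or_lt_of_le ha0 with h | h
    · simp [hg, ← h]
    · exact add_pos_of_nonneg_of_pos (by linarith) (mul_pos h (Real.exp_pos s))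
  have hgd : ∀ s, HasDerivAt g (a * Real.exp s) s := fun s =>
    ((Real.hasDerivAt_exp s).const_mul a).const_add (1 - a)
  set h : ℝ → ℝ := fun s => a * Real.exp s / g s with hh
  have hhd : ∀ s, HasDerivAt h (h s * (1 - h s)) s := by
    intro s
    have := ((Real.hasDerivAt_exp s).const_mul a).div (hgd s) (hgpos s).ne'
    refine this.congr_deriv ?_
    simp only [hh]
    field_simp [(hgpos s).ne']
  have hbound : ∀ s, h s * (1 - h s) ≤ 1 / 4 := by
    intro s; nlinarith [sq_nonneg (2 * h s - 1)]
  set H : ℝ → ℝ := fun s => s / 4 + a - h s with hH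
  have hHd : ∀ s, HasDerivAt H (1 / 4 - h s * (1 - h s)) s := by
    intro s
    have := (((hasDerivAt_id s).div_const 4).add_const a).sub (hhd s)
    exact this
  have hH0 : H 0 = 0 := by
    simp [hH, hh, hg]
  have hHmono : Monotone H := by
    apply monotone_of_deriv_nonneg
    · exact fun s => (hHd s).differentiableAt
    · intro s
      rw [(hHd s).deriv]
      linarith [hbound s]
  set G : ℝ → ℝ := fun s => s ^ 2 / 8 + a * s - Real.log (g s) with hGdef
  have hGd : ∀ s, HasDerivAt G (H s) s := by
    intro s
    have hlog : HasDerivAt (fun y => Real.log (g y)) (a * Real.exp s / g s) s := by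
      exact ((Real.hasDerivAt_log (hgpos s).ne').comp s (hgd s)).congr_deriv
        (by rw [div_eq_inv_mul])
    have := (((hasDerivAt_pow 2 s).div_const 8).add ((hasDerivAt_id s).const_mul a)).sub hlog
    refine this.congr_deriv ?_
    simp [hH, hh]
    ring
  have hGdiff : Differentiable ℝ G := fun s => (hGd s).differentiableAt
  have hG0 : G 0 = 0 := by simp [hGdef, hg]
  have hGt : ∀ s, 0 ≤ G s := by
    intro s
    rcases le_or_gt 0 s with hs | hs
    · have hmono : MonotoneOn G (Set.Ici (0:ℝ)) := by
        apply monotoneOn_of_deriv_nonneg (convex_Ici 0) hGdiff.continuous.continuousOn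
          hGdiff.differentiableOn
        intro x hx
        rw [(hGd x).deriv]
        rw [interior_Ici] at hx
        calc (0:ℝ) = H 0 := hH0.symm
        _ ≤ H x := hHmono (le_of_lt hx)
      have := hmono Set.self_mem_Ici (Set.mem_Ici.2 hs) hs
      rw [hG0] at this; exact this
    · have hanti : AntitoneOn G (Set.Iic (0:ℝ)) := by
        apply antitoneOn_of_deriv_nonpos (convex_Iic 0) hGdiff.continuous.continuousOn
          hGdiff.differentiableOn
        intro x hx
        rw [(hGd x).deriv]
        rw [interior_Iic] at hx
        calc H x ≤ H 0 := hHmono (le_of_lt hx)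
        _ = 0 := hH0
      have := hanti (Set.mem_Iic.2 hs.le) Set.self_mem_Iic hs.le
      rw [hG0] at this; exact this
  have hlog : Real.log (g t) ≤ a * t + t ^ 2 / 8 := by
    have := hGt t; simp only [hGdef] at this; linarith
  calc (1 - a) + a * Real.exp t = g t := rfl
  _ = Real.exp (Real.log (g t)) := (Real.exp_log (hgpos t)).symm
  _ ≤ Real.exp (a * t + t ^ 2 / 8) := Real.exp_le_exp.2 hlog

omit [MeasurableSpace Ω] in
lemma S_le (hbdd : ∀ i ω, X i ω ≤ 1) (n : ℕ) (ω : Ω) : S X n ω ≤ n := by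
  calc S X n ω ≤ ∑ i ∈ Finset.range n, 1 := Finset.sum_le_sum fun i _ => hbdd i ω
  _ = n := by simp

lemma exp_eq (hB : IsBernoulliSeq μ α X) (i : ℕ) (t : ℝ) (ω : Ω) :
    Real.exp (t * (X i ω : ℝ)) =
      1 + (Real.exp t - 1) * Set.indicator (X i ⁻¹' {1}) (fun _ => (1:ℝ)) ω := by
  rcases Nat.le_one_iff_eq_zero_or_eq_one.mp (hB.bdd i ω) with h | h
  · have : ω ∉ X i ⁻¹' {1} := by simp [h]
    rw [Set.indicator_of_notMem this, h]; simp
  · have : ω ∈ X i ⁻¹' {1} := by simp [h]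
    rw [Set.indicator_of_mem this, h]; simp

lemma integrable_exp_bern (hB : IsBernoulliSeq μ α X) (i : ℕ) (t : ℝ) :
    Integrable (fun ω => Real.exp (t * (X i ω : ℝ))) μ := by
  have := hB.isProb
  have hs : MeasurableSet (X i ⁻¹' {1}) := hB.meas i (measurableSet_singleton 1)
  have : Integrable (fun ω => 1 + (Real.exp t - 1) *
      Set.indicator (X i ⁻¹' {1}) (fun _ => (1:ℝ)) ω) μ := by
    exact (integrable_const 1).add (((integrable_const 1).indicator hs).const_mul _)
  exact this.congr (Filter.Eventually.of_forall fun ω => (exp_eq hB i t ω).symm)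

lemma mgf_bern (hB : IsBernoulliSeq μ α X) (h0 : 0 ≤ α) (i : ℕ) (t : ℝ) :
    mgf (fun ω => (X i ω : ℝ)) μ t = (1 - α) + α * Real.exp t := by
  have := hB.isProb
  have hs : MeasurableSet (X i ⁻¹' {1}) := hB.meas i (measurableSet_singleton 1)
  have hμs : (μ (X i ⁻¹' {1})).toReal = α := by
    rw [hB.bern i, ENNReal.toReal_ofReal h0]
  rw [mgf]
  rw [integral_congr_ae (Filter.Eventually.of_forall (exp_eq hB i t))]
  rw [integral_add (integrable_const 1) (((integrable_const 1).indicator hs).const_mul _),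
    integral_const, integral_const_mul]
  have : ∫ ω, Set.indicator (X i ⁻¹' {1}) (fun _ => (1:ℝ)) ω ∂μ = (μ (X i ⁻¹' {1})).toReal := by
    rw [integral_indicator hs]; simp; rfl
  rw [this, hμs]
  simp
  ring

lemma tail_upper (hB : IsBernoulliSeq μ α X) (h0 : 0 ≤ α) (h1 : α ≤ 1)
    {n : ℕ} (hn : 1 ≤ n) {Δ : ℝ} (hΔ : 0 ≤ Δ) :
    μ {ω | (n : ℝ) * α + Δ ≤ (S X n ω : ℝ)} ≤ ENNReal.ofReal (Real.exp (-(2 * Δ ^ 2) / n)) := by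
  have := hB.isProb
  set X' : ℕ → Ω → ℝ := fun i ω => (X i ω : ℝ) with hX'
  have hmeas' : ∀ i, Measurable (X' i) := fun i => measurable_from_top.comp (hB.meas i)
  have hindep' : iIndepFun X' μ :=
    hB.indep.comp (fun _ => (Nat.cast : ℕ → ℝ)) fun _ => measurable_from_top
  have hnpos : (0:ℝ) < n := by exact_mod_cast hn
  set t : ℝ := 4 * Δ / n with ht
  have htpos : 0 ≤ t := by positivity
  have hSsum : (fun ω => (S X n ω : ℝ)) = ∑ i ∈ Finset.range n, X' i := by
    funext ω; simp [S, hX']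
  have hint : ∀ i ∈ Finset.range n, Integrable (fun ω => Real.exp (t * X' i ω)) μ :=
    fun i _ => integrable_exp_bern hB i t
  have hintS : Integrable (fun ω => Real.exp (t * (∑ i ∈ Finset.range n, X' i) ω)) μ :=
    hindep'.integrable_exp_mul_sum hmeas' hint
  have hmgf : mgf (∑ i ∈ Finset.range n, X' i) μ t = ((1 - α) + α * Real.exp t) ^ n := by
    rw [hindep'.mgf_sum hmeas']
    rw [Finset.prod_congr rfl fun i _ => mgf_bern hB h0 i t]
    simp
  have key := measure_ge_le_exp_mul_mgf ((n:ℝ) * α + Δ) htpos hintS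
  rw [hmgf] at key
  have hb : ((1 - α) + α * Real.exp t) ^ n ≤ Real.exp ((n:ℝ) * (α * t + t ^ 2 / 8)) := by
    rw [Real.exp_nat_mul]
    refine pow_le_pow_left₀ ?_ (hoeff_bern h0 h1 t) n
    nlinarith [Real.exp_pos t, mul_nonneg h0 (Real.exp_pos t).le]
  have hexp : -t * ((n:ℝ) * α + Δ) + (n:ℝ) * (α * t + t ^ 2 / 8) = -(2 * Δ ^ 2) / n := by
    rw [ht]; field_simp; ring
  have key2 : (μ {ω | (n : ℝ) * α + Δ ≤ (S X n ω : ℝ)}).toReal ≤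
      Real.exp (-(2 * Δ ^ 2) / n) := by
    rw [← hexp, Real.exp_add]
    calc (μ {ω | (n : ℝ) * α + Δ ≤ (S X n ω : ℝ)}).toReal
        = (μ {ω | (n : ℝ) * α + Δ ≤ (∑ i ∈ Finset.range n, X' i) ω}).toReal := by
          rw [← hSsum]
      _ ≤ Real.exp (-t * ((n:ℝ) * α + Δ)) * ((1 - α) + α * Real.exp t) ^ n := key
      _ ≤ Real.exp (-t * ((n:ℝ) * α + Δ)) * Real.exp ((n:ℝ) * (α * t + t ^ 2 / 8)) := by
          exact mul_le_mul_of_nonneg_left hb (Real.exp_pos _).le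
  calc μ {ω | (n : ℝ) * α + Δ ≤ (S X n ω : ℝ)}
      = ENNReal.ofReal ((μ {ω | (n : ℝ) * α + Δ ≤ (S X n ω : ℝ)}).toReal) :=
        (ENNReal.ofReal_toReal (measure_ne_top μ _)).symm
    _ ≤ ENNReal.ofReal (Real.exp (-(2 * Δ ^ 2) / n)) := ENNReal.ofReal_le_ofReal key2

lemma tail_lower (hB : IsBernoulliSeq μ α X) (h0 : 0 ≤ α) (h1 : α ≤ 1)
    {n : ℕ} (hn : 1 ≤ n) {Δ : ℝ} (hΔ : 0 ≤ Δ) :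
    μ {ω | (S X n ω : ℝ) ≤ (n : ℝ) * α - Δ} ≤ ENNReal.ofReal (Real.exp (-(2 * Δ ^ 2) / n)) := by
  have := hB.isProb
  set X' : ℕ → Ω → ℝ := fun i ω => (X i ω : ℝ) with hX'
  have hmeas' : ∀ i, Measurable (X' i) := fun i => measurable_from_top.comp (hB.meas i)
  have hindep' : iIndepFun X' μ :=
    hB.indep.comp (fun _ => (Nat.cast : ℕ → ℝ)) fun _ => measurable_from_top
  have hnpos : (0:ℝ) < n := by exact_mod_cast hn
  set t : ℝ := -(4 * Δ / n) with ht
  have htneg : t ≤ 0 := by rw [ht]; simp; positivity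
  have hSsum : (fun ω => (S X n ω : ℝ)) = ∑ i ∈ Finset.range n, X' i := by
    funext ω; simp [S, hX']
  have hint : ∀ i ∈ Finset.range n, Integrable (fun ω => Real.exp (t * X' i ω)) μ :=
    fun i _ => integrable_exp_bern hB i t
  have hintS : Integrable (fun ω => Real.exp (t * (∑ i ∈ Finset.range n, X' i) ω)) μ :=
    hindep'.integrable_exp_mul_sum hmeas' hint
  have hmgf : mgf (∑ i ∈ Finset.range n, X' i) μ t = ((1 - α) + α * Real.exp t) ^ n := by
    rw [hindep'.mgf_sum hmeas']
    rw [Finset.prod_congr rfl fun i _ => mgf_bern hB h0 i t]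
    simp
  have key := measure_le_le_exp_mul_mgf ((n:ℝ) * α - Δ) htneg hintS
  rw [hmgf] at key
  have hb : ((1 - α) + α * Real.exp t) ^ n ≤ Real.exp ((n:ℝ) * (α * t + t ^ 2 / 8)) := by
    rw [Real.exp_nat_mul]
    refine pow_le_pow_left₀ ?_ (hoeff_bern h0 h1 t) n
    nlinarith [Real.exp_pos t, mul_nonneg h0 (Real.exp_pos t).le]
  have hexp : -t * ((n:ℝ) * α - Δ) + (n:ℝ) * (α * t + t ^ 2 / 8) = -(2 * Δ ^ 2) / n := by
    rw [ht]; field_simp; ring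
  have key2 : (μ {ω | (S X n ω : ℝ) ≤ (n : ℝ) * α - Δ}).toReal ≤
      Real.exp (-(2 * Δ ^ 2) / n) := by
    rw [← hexp, Real.exp_add]
    calc (μ {ω | (S X n ω : ℝ) ≤ (n : ℝ) * α - Δ}).toReal
        = (μ {ω | (∑ i ∈ Finset.range n, X' i) ω ≤ (n : ℝ) * α - Δ}).toReal := by
          rw [← hSsum]
      _ ≤ Real.exp (-t * ((n:ℝ) * α - Δ)) * ((1 - α) + α * Real.exp t) ^ n := key
      _ ≤ Real.exp (-t * ((n:ℝ) * α - Δ)) * Real.exp ((n:ℝ) * (α * t + t ^ 2 / 8)) := by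
          exact mul_le_mul_of_nonneg_left hb (Real.exp_pos _).le
  calc μ {ω | (S X n ω : ℝ) ≤ (n : ℝ) * α - Δ}
      = ENNReal.ofReal ((μ {ω | (S X n ω : ℝ) ≤ (n : ℝ) * α - Δ}).toReal) :=
        (ENNReal.ofReal_toReal (measure_ne_top μ _)).symm
    _ ≤ ENNReal.ofReal (Real.exp (-(2 * Δ ^ 2) / n)) := ENNReal.ofReal_le_ofReal key2

omit [MeasurableSpace Ω] in
lemma notStopped_congr {U L U' L' : ℕ → ℤ} {n : ℕ} {ω : Ω}
    (h : ∀ k, 1 ≤ k → k ≤ n → U k = U' k ∧ L k = L' k) :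
    notStopped X U L n ω ↔ notStopped X U' L' n ω := by
  constructor <;> intro hh k h1 h2
  · rw [← (h k h1 h2).1, ← (h k h1 h2).2]; exact hh k h1 h2
  · rw [(h k h1 h2).1, (h k h1 h2).2]; exact hh k h1 h2

omit [MeasurableSpace Ω] in
lemma hitUpperBy_congr {U L U' L' : ℕ → ℤ} {n : ℕ} {ω : Ω}
    (h : ∀ k, 1 ≤ k → k ≤ n → U k = U' k ∧ L k = L' k) :
    hitUpperBy X U L n ω ↔ hitUpperBy X U' L' n ω := by
  have h' : ∀ k, 1 ≤ k → k ≤ n → U' k = U k ∧ L' k = L k :=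
    fun k a b => ⟨(h k a b).1.symm, (h k a b).2.symm⟩
  constructor
  · rintro ⟨k, h1, h2, h3, h4⟩
    refine ⟨k, h1, h2, (notStopped_congr (fun j a b => h j a (by omega))).mp h3, ?_⟩
    rw [← (h k h1 h2).1]; exact h4
  · rintro ⟨k, h1, h2, h3, h4⟩
    refine ⟨k, h1, h2, (notStopped_congr (fun j a b => h' j a (by omega))).mp h3, ?_⟩
    rw [(h k h1 h2).1]; exact h4

omit [MeasurableSpace Ω] in
lemma hitLowerBy_congr {U L U' L' : ℕ → ℤ} {n : ℕ} {ω : Ω}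
    (h : ∀ k, 1 ≤ k → k ≤ n → U k = U' k ∧ L k = L' k) :
    hitLowerBy X U L n ω ↔ hitLowerBy X U' L' n ω := by
  have h' : ∀ k, 1 ≤ k → k ≤ n → U' k = U k ∧ L' k = L k :=
    fun k a b => ⟨(h k a b).1.symm, (h k a b).2.symm⟩
  constructor
  · rintro ⟨k, h1, h2, h3, h4⟩
    refine ⟨k, h1, h2, (notStopped_congr (fun j a b => h j a (by omega))).mp h3, ?_⟩
    rw [← (h k h1 h2).2]; exact h4
  · rintro ⟨k, h1, h2, h3, h4⟩
    refine ⟨k, h1, h2, (notStopped_congr (fun j a b => h' j a (by omega))).mp h3, ?_⟩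
    rw [(h k h1 h2).2]; exact h4

/-- The defining set for `U_{n+2}`. -/
def USet (μ : Measure Ω) (X : ℕ → Ω → ℕ) (εs : ℕ → ℝ) (n : ℕ) : Set ℤ :=
  {j : ℤ | 1 ≤ j ∧
    μ {ω | notStopped X (Ub μ X εs) (Lb μ X εs) (n + 1) ω ∧ j ≤ (S X (n + 2) ω : ℤ)} +
      μ {ω | hitUpperBy X (Ub μ X εs) (Lb μ X εs) (n + 1) ω} ≤ ENNReal.ofReal (εs (n + 2))}

/-- The defining set for `L_{n+2}`. -/
def LSet (μ : Measure Ω) (X : ℕ → Ω → ℕ) (εs : ℕ → ℝ) (n : ℕ) : Set ℤ :=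
  {j : ℤ |
    μ {ω | notStopped X (Ub μ X εs) (Lb μ X εs) (n + 1) ω ∧ (S X (n + 2) ω : ℤ) ≤ j} +
      μ {ω | hitLowerBy X (Ub μ X εs) (Lb μ X εs) (n + 1) ω} ≤ ENNReal.ofReal (εs (n + 2))}

lemma bnd_succ (μ : Measure Ω) (X : ℕ → Ω → ℕ) (εs : ℕ → ℝ) (n : ℕ) :
    bnd μ X εs (n + 2) = (sInf (USet μ X εs n), sSup (LSet μ X εs n)) := by
  rw [bnd]
  set U' : ℕ → ℤ := fun k => if h : k < n + 2 then (bnd μ X εs k).1 else 0 with hU'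
  set L' : ℕ → ℤ := fun k => if h : k < n + 2 then (bnd μ X εs k).2 else 0 with hL'
  have hagree : ∀ k, 1 ≤ k → k ≤ n + 1 → U' k = Ub μ X εs k ∧ L' k = Lb μ X εs k := by
    intro k h1 h2
    constructor
    · rw [hU']; simp only; rw [dif_pos (by omega : k < n + 2)]; rfl
    · rw [hL']; simp only; rw [dif_pos (by omega : k < n + 2)]; rfl
  have hNS : ∀ ω : Ω, notStopped X U' L' (n+1) ω ↔
      notStopped X (Ub μ X εs) (Lb μ X εs) (n+1) ω := fun ω => notStopped_congr hagree
  have hHU : ∀ ω : Ω, hitUpperBy X U' L' (n+1) ω ↔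
      hitUpperBy X (Ub μ X εs) (Lb μ X εs) (n+1) ω := fun ω => hitUpperBy_congr hagree
  have hHL : ∀ ω : Ω, hitLowerBy X U' L' (n+1) ω ↔
      hitLowerBy X (Ub μ X εs) (Lb μ X εs) (n+1) ω := fun ω => hitLowerBy_congr hagree
  have e1 : ∀ j : ℤ, {ω | notStopped X U' L' (n+1) ω ∧ j ≤ (S X (n + 2) ω : ℤ)} =
      {ω | notStopped X (Ub μ X εs) (Lb μ X εs) (n+1) ω ∧ j ≤ (S X (n + 2) ω : ℤ)} := by
    intro j; ext ω; exact and_congr_left fun _ => hNS ω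
  have e2 : ∀ j : ℤ, {ω | notStopped X U' L' (n+1) ω ∧ (S X (n + 2) ω : ℤ) ≤ j} =
      {ω | notStopped X (Ub μ X εs) (Lb μ X εs) (n+1) ω ∧ (S X (n + 2) ω : ℤ) ≤ j} := by
    intro j; ext ω; exact and_congr_left fun _ => hNS ω
  have e3 : {ω | hitUpperBy X U' L' (n+1) ω} =
      {ω | hitUpperBy X (Ub μ X εs) (Lb μ X εs) (n+1) ω} := by
    ext ω; exact hHU ω
  have e4 : {ω | hitLowerBy X U' L' (n+1) ω} =
      {ω | hitLowerBy X (Ub μ X εs) (Lb μ X εs) (n+1) ω} := by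
    ext ω; exact hHL ω
  congr 1
  · congr 1
    ext j
    simp only [USet, Set.mem_setOf_eq, e1 j, e3]
  · congr 1
    ext j
    simp only [LSet, Set.mem_setOf_eq, e2 j, e4]

lemma Ub_succ (μ : Measure Ω) (X : ℕ → Ω → ℕ) (εs : ℕ → ℝ) (n : ℕ) :
    Ub μ X εs (n + 2) = sInf (USet μ X εs n) := by
  show (bnd μ X εs (n + 2)).1 = _
  rw [bnd_succ]

lemma Lb_succ (μ : Measure Ω) (X : ℕ → Ω → ℕ) (εs : ℕ → ℝ) (n : ℕ) :
    Lb μ X εs (n + 2) = sSup (LSet μ X εs n) := by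
  show (bnd μ X εs (n + 2)).2 = _
  rw [bnd_succ]

omit [MeasurableSpace Ω] in
lemma cover (X : ℕ → Ω → ℕ) (U L : ℕ → ℤ) (n : ℕ) (ω : Ω) :
    notStopped X U L n ω ∨ hitUpperBy X U L n ω ∨ hitLowerBy X U L n ω := by
  induction n with
  | zero => exact Or.inl (fun k h1 h2 => by omega)
  | succ n ih =>
    rcases ih with hns | hU | hL
    · rcases le_or_gt (S X (n+1) ω : ℤ) (L (n+1)) with h | h
      · exact Or.inr (Or.inr ⟨n+1, by omega, le_refl _, by simpa using hns, h⟩)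
      · rcases le_or_gt (U (n+1)) (S X (n+1) ω : ℤ) with h2 | h2
        · exact Or.inr (Or.inl ⟨n+1, by omega, le_refl _, by simpa using hns, h2⟩)
        · refine Or.inl fun k h1 hk => ?_
          by_cases hkn : k ≤ n
          · exact hns k h1 hkn
          · have hke : k = n+1 := by omega
            subst hke; exact ⟨h, h2⟩
    · obtain ⟨k, a, b, c, d⟩ := hU
      exact Or.inr (Or.inl ⟨k, a, b.trans (Nat.le_succ n), c, d⟩)
    · obtain ⟨k, a, b, c, d⟩ := hL
      exact Or.inr (Or.inr ⟨k, a, b.trans (Nat.le_succ n), c, d⟩)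

lemma Ub_one (μ : Measure Ω) (X : ℕ → Ω → ℕ) (εs : ℕ → ℝ) : Ub μ X εs 1 = 2 := by
  show (bnd μ X εs 1).1 = 2
  rw [bnd]

lemma Lb_one (μ : Measure Ω) (X : ℕ → Ω → ℕ) (εs : ℕ → ℝ) : Lb μ X εs 1 = -1 := by
  show (bnd μ X εs 1).2 = -1
  rw [bnd]

lemma hit_le (hB : IsBernoulliSeq μ α X)
    (hnn : ∀ n, 0 ≤ εs n) (hmono : Monotone εs) (hhalf : ∀ n, εs n < 1/2) :
    ∀ n : ℕ, 1 ≤ n →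
      μ {ω | hitUpperBy X (Ub μ X εs) (Lb μ X εs) n ω} ≤ ENNReal.ofReal (εs n) ∧
      μ {ω | hitLowerBy X (Ub μ X εs) (Lb μ X εs) n ω} ≤ ENNReal.ofReal (εs n) := by
  have hprob := hB.isProb
  refine Nat.le_induction ?_ ?_
  · constructor
    · have he : {ω | hitUpperBy X (Ub μ X εs) (Lb μ X εs) 1 ω} = ∅ := by
        ext ω
        simp only [Set.mem_setOf_eq, Set.mem_empty_iff_false, iff_false]
        rintro ⟨k, h1, h2, h3, h4⟩
        have hk : k = 1 := by omega
        subst hk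
        rw [Ub_one] at h4
        have hs := S_le hB.bdd 1 ω
        omega
      rw [he, measure_empty]; exact zero_le
    · have he : {ω | hitLowerBy X (Ub μ X εs) (Lb μ X εs) 1 ω} = ∅ := by
        ext ω
        simp only [Set.mem_setOf_eq, Set.mem_empty_iff_false, iff_false]
        rintro ⟨k, h1, h2, h3, h4⟩
        have hk : k = 1 := by omega
        subst hk
        rw [Lb_one] at h4
        omega
      rw [he, measure_empty]; exact zero_le
  · intro n hn ih
    obtain ⟨m, rfl⟩ : ∃ m, n = m + 1 := ⟨n - 1, by omega⟩
    obtain ⟨IHU, IHL⟩ := ih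
    -- the USet is nonempty and bounded below
    have hSUne : (USet μ X εs m).Nonempty := by
      refine ⟨(m : ℤ) + 3, by omega, ?_⟩
      have h0 : μ {ω | notStopped X (Ub μ X εs) (Lb μ X εs) (m+1) ω ∧
          (m : ℤ) + 3 ≤ (S X (m + 2) ω : ℤ)} = 0 := by
        refine measure_mono_null (fun ω hω => ?_) (measure_empty (μ := μ))
        exfalso
        have hs := S_le hB.bdd (m+2) ω
        have h2 := hω.2
        omega
      rw [h0, zero_add]
      exact le_trans IHU (ENNReal.ofReal_le_ofReal (hmono (by omega)))
    have hSUbdd : BddBelow (USet μ X εs m) := ⟨1, fun j hj => hj.1⟩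
    have hmemU := Int.csInf_mem hSUne hSUbdd
    rw [← Ub_succ] at hmemU
    -- the LSet is nonempty and bounded above
    have hSLne : (LSet μ X εs m).Nonempty := by
      refine ⟨(-1 : ℤ), ?_⟩
      show μ _ + μ _ ≤ _
      have h0 : μ {ω | notStopped X (Ub μ X εs) (Lb μ X εs) (m+1) ω ∧
          (S X (m + 2) ω : ℤ) ≤ (-1 : ℤ)} = 0 := by
        refine measure_mono_null (fun ω hω => ?_) (measure_empty (μ := μ))
        exfalso
        have h2 := hω.2
        omega
      rw [h0, zero_add]
      exact le_trans IHL (ENNReal.ofReal_le_ofReal (hmono (by omega)))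
    have hSLbdd : BddAbove (LSet μ X εs m) := by
      refine ⟨(m : ℤ) + 1, fun j hj => ?_⟩
      by_contra hgt
      push_neg at hgt
      have hset : {ω | notStopped X (Ub μ X εs) (Lb μ X εs) (m+1) ω ∧
          (S X (m + 2) ω : ℤ) ≤ j} =
          {ω | notStopped X (Ub μ X εs) (Lb μ X εs) (m+1) ω} := by
        ext ω
        simp only [Set.mem_setOf_eq, and_iff_left_iff_imp]
        intro _
        have hs := S_le hB.bdd (m+2) ω
        omega
      have hj' := hj
      rw [LSet, Set.mem_setOf_eq] at hj'
      change μ _ + μ _ ≤ _ at hj'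
      rw [hset] at hj'
      have hcover : (1:ℝ≥0∞) ≤ μ {ω | notStopped X (Ub μ X εs) (Lb μ X εs) (m+1) ω} +
          (μ {ω | hitUpperBy X (Ub μ X εs) (Lb μ X εs) (m+1) ω} +
           μ {ω | hitLowerBy X (Ub μ X εs) (Lb μ X εs) (m+1) ω}) := by
        calc (1:ℝ≥0∞) = μ Set.univ := measure_univ.symm
        _ ≤ μ ({ω | notStopped X (Ub μ X εs) (Lb μ X εs) (m+1) ω} ∪
              ({ω | hitUpperBy X (Ub μ X εs) (Lb μ X εs) (m+1) ω} ∪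
               {ω | hitLowerBy X (Ub μ X εs) (Lb μ X εs) (m+1) ω})) := by
            refine measure_mono fun ω _ => ?_
            rcases cover X (Ub μ X εs) (Lb μ X εs) (m+1) ω with h | h | h
            · exact Or.inl h
            · exact Or.inr (Or.inl h)
            · exact Or.inr (Or.inr h)
        _ ≤ _ := le_trans (measure_union_le _ _) (add_le_add_right (measure_union_le _ _) _)
      have hfin : (1:ℝ≥0∞) ≤ ENNReal.ofReal (εs (m+2)) + ENNReal.ofReal (εs (m+1)) := by
        calc (1:ℝ≥0∞) ≤ μ {ω | notStopped X (Ub μ X εs) (Lb μ X εs) (m+1) ω} +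
            (μ {ω | hitUpperBy X (Ub μ X εs) (Lb μ X εs) (m+1) ω} +
             μ {ω | hitLowerBy X (Ub μ X εs) (Lb μ X εs) (m+1) ω}) := hcover
        _ = (μ {ω | notStopped X (Ub μ X εs) (Lb μ X εs) (m+1) ω} +
             μ {ω | hitLowerBy X (Ub μ X εs) (Lb μ X εs) (m+1) ω}) +
            μ {ω | hitUpperBy X (Ub μ X εs) (Lb μ X εs) (m+1) ω} := by ring
        _ ≤ ENNReal.ofReal (εs (m+2)) + ENNReal.ofReal (εs (m+1)) := add_le_add hj' IHU
      rw [← ENNReal.ofReal_add (hnn _) (hnn _)] at hfin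
      have hlt1 : ENNReal.ofReal (εs (m+2) + εs (m+1)) < 1 :=
        ENNReal.ofReal_lt_one.2 (by linarith [hhalf (m+2), hhalf (m+1)])
      exact absurd (lt_of_le_of_lt hfin hlt1) (lt_irrefl _)
    have hmemL := Int.csSup_mem hSLne hSLbdd
    rw [← Lb_succ] at hmemL
    constructor
    · -- upper at m+2
      obtain ⟨-, hUbmeas⟩ := hmemU
      have hsub : {ω | hitUpperBy X (Ub μ X εs) (Lb μ X εs) (m+2) ω} ⊆
          {ω | notStopped X (Ub μ X εs) (Lb μ X εs) (m+1) ω ∧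
            Ub μ X εs (m+2) ≤ (S X (m + 2) ω : ℤ)} ∪
          {ω | hitUpperBy X (Ub μ X εs) (Lb μ X εs) (m+1) ω} := by
        rintro ω ⟨k, h1, h2, h3, h4⟩
        by_cases hk : k ≤ m + 1
        · exact Or.inr ⟨k, h1, hk, h3, h4⟩
        · have hke : k = m + 2 := by omega
          subst hke
          exact Or.inl ⟨by simpa using h3, h4⟩
      exact le_trans (le_trans (measure_mono hsub) (measure_union_le _ _)) hUbmeas
    · -- lower at m+2
      have hLbmeas := hmemL
      change μ _ + μ _ ≤ _ at hLbmeas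
      have hsub : {ω | hitLowerBy X (Ub μ X εs) (Lb μ X εs) (m+2) ω} ⊆
          {ω | notStopped X (Ub μ X εs) (Lb μ X εs) (m+1) ω ∧
            (S X (m + 2) ω : ℤ) ≤ Lb μ X εs (m+2)} ∪
          {ω | hitLowerBy X (Ub μ X εs) (Lb μ X εs) (m+1) ω} := by
        rintro ω ⟨k, h1, h2, h3, h4⟩
        by_cases hk : k ≤ m + 1
        · exact Or.inr ⟨k, h1, hk, h3, h4⟩
        · have hke : k = m + 2 := by omega
          subst hke
          exact Or.inl ⟨by simpa using h3, h4⟩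
      exact le_trans (le_trans (measure_mono hsub) (measure_union_le _ _)) hLbmeas

end ProofAux

theorem statement_10 {Ω : Type*} [MeasurableSpace Ω]
    (α ε : ℝ) (hα : α ∈ Set.Ioo (0:ℝ) 1) (hε : ε ∈ Set.Ioo (0:ℝ) 1)
    (εs : ℕ → ℝ) (hεs0 : εs 0 = 0) (hmono : Monotone εs)
    (hnonneg : ∀ n, 0 ≤ εs n) (hlt : ∀ n, εs n < ε)
    (hlim : Filter.Tendsto εs Filter.atTop (nhds ε))
    (P : ℝ → Measure Ω) (X : ℕ → Ω → ℕ)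
    (hBern : ∀ p ∈ Set.Icc (0:ℝ) 1, IsBernoulliSeq (P p) p X)
    (hεhalf : ε < 1 / 2) (hstrict : ∀ n : ℕ, 2 ≤ n → εs (n - 1) < εs n) :
    ∀ n : ℕ, 2 ≤ n →
      ((Ub (P α) X εs n : ℝ) ≤
          n * α + Real.sqrt (-((n : ℝ) * Real.log (εs n - εs (n - 1))) / 2) + 1) ∧
        (n * α - Real.sqrt (-((n : ℝ) * Real.log (εs n - εs (n - 1))) / 2) - 1 ≤
          (Lb (P α) X εs n : ℝ)) := by
  have hB := hBern α ⟨hα.1.le, hα.2.le⟩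
  have hprob := hB.isProb
  have hhalf : ∀ n, εs n < 1/2 := fun n => lt_trans (hlt n) hεhalf
  have hind := hit_le hB hnonneg hmono hhalf
  intro n hn
  obtain ⟨m, rfl⟩ : ∃ m, n = m + 2 := ⟨n - 2, by omega⟩
  obtain ⟨IHU, IHL⟩ := hind (m+1) (by omega)
  have hm1 : (m + 2) - 1 = m + 1 := rfl
  rw [hm1]
  set d : ℝ := εs (m+2) - εs (m+1) with hdd
  have hd : 0 < d := by
    have := hstrict (m+2) (by omega)
    rw [hm1] at this
    simp only [hdd]
    linarith
  have hd1 : d < 1 := by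
    have h1 := hhalf (m+2)
    have h2 := hnonneg (m+1)
    simp only [hdd]
    linarith
  set Δ : ℝ := Real.sqrt (-((m + 2 : ℕ) * Real.log d) / 2) with hΔd
  have hΔnn : 0 ≤ Δ := Real.sqrt_nonneg _
  have hlogd : Real.log d ≤ 0 := Real.log_nonpos hd.le hd1.le
  have hnposR : (0:ℝ) < (m + 2 : ℕ) := by positivity
  have hargnn : 0 ≤ -((m + 2 : ℕ) * Real.log d) / 2 := by
    have : (m + 2 : ℕ) * Real.log d ≤ 0 := mul_nonpos_of_nonneg_of_nonpos hnposR.le hlogd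
    linarith
  have hΔsq : Δ ^ 2 = -((m + 2 : ℕ) * Real.log d) / 2 := Real.sq_sqrt hargnn
  have hexpd : Real.exp (-(2 * Δ ^ 2) / (m + 2 : ℕ)) = d := by
    rw [hΔsq]
    have harg : -(2 * (-((m + 2 : ℕ) * Real.log d) / 2)) / (m + 2 : ℕ) = Real.log d := by
      field_simp
    rw [harg, Real.exp_log hd]
  -- re-derive boundedness facts for the sets at index m
  have hSUbdd : BddBelow (USet (P α) X εs m) := ⟨1, fun j hj => hj.1⟩
  have hSLbdd : BddAbove (LSet (P α) X εs m) := by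
    refine ⟨(m : ℤ) + 1, fun j hj => ?_⟩
    by_contra hgt
    push_neg at hgt
    have hset : {ω | notStopped X (Ub (P α) X εs) (Lb (P α) X εs) (m+1) ω ∧
        (S X (m + 2) ω : ℤ) ≤ j} =
        {ω | notStopped X (Ub (P α) X εs) (Lb (P α) X εs) (m+1) ω} := by
      ext ω
      simp only [Set.mem_setOf_eq, and_iff_left_iff_imp]
      intro _
      have hs := S_le hB.bdd (m+2) ω
      omega
    have hj' := hj
    rw [LSet, Set.mem_setOf_eq] at hj'
    change P α _ + P α _ ≤ _ at hj'
    rw [hset] at hj'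
    have hcover : (1:ℝ≥0∞) ≤ P α {ω | notStopped X (Ub (P α) X εs) (Lb (P α) X εs) (m+1) ω} +
        (P α {ω | hitUpperBy X (Ub (P α) X εs) (Lb (P α) X εs) (m+1) ω} +
         P α {ω | hitLowerBy X (Ub (P α) X εs) (Lb (P α) X εs) (m+1) ω}) := by
      calc (1:ℝ≥0∞) = P α Set.univ := measure_univ.symm
      _ ≤ P α ({ω | notStopped X (Ub (P α) X εs) (Lb (P α) X εs) (m+1) ω} ∪
            ({ω | hitUpperBy X (Ub (P α) X εs) (Lb (P α) X εs) (m+1) ω} ∪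
             {ω | hitLowerBy X (Ub (P α) X εs) (Lb (P α) X εs) (m+1) ω})) := by
          refine measure_mono fun ω _ => ?_
          rcases cover X (Ub (P α) X εs) (Lb (P α) X εs) (m+1) ω with h | h | h
          · exact Or.inl h
          · exact Or.inr (Or.inl h)
          · exact Or.inr (Or.inr h)
      _ ≤ _ := le_trans (measure_union_le _ _) (add_le_add_right (measure_union_le _ _) _)
    have hfin : (1:ℝ≥0∞) ≤ ENNReal.ofReal (εs (m+2)) + ENNReal.ofReal (εs (m+1)) := by
      calc (1:ℝ≥0∞) ≤ _ := hcover
      _ = (P α {ω | notStopped X (Ub (P α) X εs) (Lb (P α) X εs) (m+1) ω} +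
           P α {ω | hitLowerBy X (Ub (P α) X εs) (Lb (P α) X εs) (m+1) ω}) +
          P α {ω | hitUpperBy X (Ub (P α) X εs) (Lb (P α) X εs) (m+1) ω} := by ring
      _ ≤ ENNReal.ofReal (εs (m+2)) + ENNReal.ofReal (εs (m+1)) := add_le_add hj' IHU
    rw [← ENNReal.ofReal_add (hnonneg _) (hnonneg _)] at hfin
    have hlt1 : ENNReal.ofReal (εs (m+2) + εs (m+1)) < 1 :=
      ENNReal.ofReal_lt_one.2 (by linarith [hhalf (m+2), hhalf (m+1)])
    exact absurd (lt_of_le_of_lt hfin hlt1) (lt_irrefl _)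
  set x : ℝ := (m + 2 : ℕ) * α + Δ with hxd
  set y : ℝ := (m + 2 : ℕ) * α - Δ with hyd
  constructor
  · -- upper bound on Ub
    have htail := tail_upper hB hα.1.le hα.2.le (show 1 ≤ m + 2 by omega) hΔnn
    rw [hexpd] at htail
    have hfirst : P α {ω | notStopped X (Ub (P α) X εs) (Lb (P α) X εs) (m+1) ω ∧
        (⌊x⌋ + 1 : ℤ) ≤ (S X (m + 2) ω : ℤ)} ≤ ENNReal.ofReal d := by
      refine le_trans (measure_mono fun ω hω => ?_) htail
      have h2 := hω.2
      have hcast : ((⌊x⌋ : ℝ) + 1) ≤ (S X (m + 2) ω : ℝ) := by exact_mod_cast h2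
      have hfl : x < (⌊x⌋ : ℝ) + 1 := Int.lt_floor_add_one x
      show (m + 2 : ℕ) * α + Δ ≤ (S X (m + 2) ω : ℝ)
      rw [← hxd]
      linarith
    have hj0mem : (⌊x⌋ + 1 : ℤ) ∈ USet (P α) X εs m := by
      constructor
      · have hx0 : (0:ℝ) ≤ x := by
          rw [hxd]
          exact add_nonneg (mul_nonneg hnposR.le hα.1.le) hΔnn
        have := Int.floor_nonneg.2 hx0
        omega
      · calc P α _ + P α _ ≤ ENNReal.ofReal d + ENNReal.ofReal (εs (m+1)) :=
            add_le_add hfirst IHU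
        _ = ENNReal.ofReal (d + εs (m+1)) := (ENNReal.ofReal_add hd.le (hnonneg _)).symm
        _ = ENNReal.ofReal (εs (m+2)) := by rw [hdd, sub_add_cancel]
    have hle : Ub (P α) X εs (m+2) ≤ ⌊x⌋ + 1 := by
      rw [Ub_succ]
      exact csInf_le hSUbdd hj0mem
    have hcast : (Ub (P α) X εs (m+2) : ℝ) ≤ (⌊x⌋ : ℝ) + 1 := by exact_mod_cast hle
    have := Int.floor_le x
    calc (Ub (P α) X εs (m+2) : ℝ) ≤ (⌊x⌋ : ℝ) + 1 := hcast
    _ ≤ x + 1 := by linarith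
    _ = (m + 2 : ℕ) * α + Δ + 1 := by rw [hxd]
  · -- lower bound on Lb
    have htail := tail_lower hB hα.1.le hα.2.le (show 1 ≤ m + 2 by omega) hΔnn
    rw [hexpd] at htail
    have hfirst : P α {ω | notStopped X (Ub (P α) X εs) (Lb (P α) X εs) (m+1) ω ∧
        (S X (m + 2) ω : ℤ) ≤ (⌈y⌉ - 1 : ℤ)} ≤ ENNReal.ofReal d := by
      refine le_trans (measure_mono fun ω hω => ?_) htail
      have h2 := hω.2
      have hcast : (S X (m + 2) ω : ℝ) ≤ (⌈y⌉ : ℝ) - 1 := by exact_mod_cast h2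
      have hcl : (⌈y⌉ : ℝ) < y + 1 := Int.ceil_lt_add_one y
      show (S X (m + 2) ω : ℝ) ≤ (m + 2 : ℕ) * α - Δ
      rw [← hyd]
      linarith
    have hj1mem : (⌈y⌉ - 1 : ℤ) ∈ LSet (P α) X εs m := by
      show P α _ + P α _ ≤ _
      calc P α _ + P α _ ≤ ENNReal.ofReal d + ENNReal.ofReal (εs (m+1)) :=
          add_le_add hfirst IHL
      _ = ENNReal.ofReal (d + εs (m+1)) := (ENNReal.ofReal_add hd.le (hnonneg _)).symm
      _ = ENNReal.ofReal (εs (m+2)) := by rw [hdd, sub_add_cancel]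
    have hle : (⌈y⌉ - 1 : ℤ) ≤ Lb (P α) X εs (m+2) := by
      rw [Lb_succ]
      exact le_csSup hSLbdd hj1mem
    have hcast : (⌈y⌉ : ℝ) - 1 ≤ (Lb (P α) X εs (m+2) : ℝ) := by exact_mod_cast hle
    have := Int.le_ceil y
    calc (m + 2 : ℕ) * α - Δ - 1 = y - 1 := by rw [hyd]
    _ ≤ (⌈y⌉ : ℝ) - 1 := by linarith
    _ ≤ (Lb (P α) X εs (m+2) : ℝ) := hcast


end SeqMC
end

section
/- For every n ∈ ℕ, the naive estimator p̂_naive = S_n/n has resampling risk at least one half in the worst case: sup over p ∈ [0,1] of RR_p(p̂_naive) ≥ 1/2. -/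
open MeasureTheory ProbabilityTheory Filter Asymptotics
open scoped ENNReal

namespace SeqMC

variable {Ω : Type*} [MeasurableSpace Ω]

/-- The binomial CDF formula for the partial sums of a Bernoulli sequence. -/
lemma binom_cdf (P : Measure Ω) (p : ℝ) (X : ℕ → Ω → ℕ)
    (h : IsBernoulliSeq P p X) (hp : p ∈ Set.Icc (0:ℝ) 1) (n k : ℕ) :
    P {ω | S X n ω ≤ k} =
      ENNReal.ofReal (∑ T ∈ (Finset.range n).powerset.filter (fun T => T.card ≤ k),
        ∏ i ∈ Finset.range n, (if i ∈ T then p else 1 - p)) := by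
  haveI := h.isProb
  -- measure of X i = 0
  have h0 : ∀ i, P (X i ⁻¹' {0}) = ENNReal.ofReal (1 - p) := by
    intro i
    have hc : X i ⁻¹' {0} = (X i ⁻¹' {1})ᶜ := by
      ext ω
      have := h.bdd i ω
      simp only [Set.mem_preimage, Set.mem_singleton_iff, Set.mem_compl_iff]
      omega
    rw [hc, measure_compl ((h.meas i) (measurableSet_singleton _)) (measure_ne_top _ _),
      h.bern i, measure_univ, ENNReal.ofReal_sub 1 hp.1, ENNReal.ofReal_one]
  set E : Finset ℕ → Set Ω :=
    fun T => ⋂ i ∈ Finset.range n, X i ⁻¹' {if i ∈ T then 1 else 0} with hE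
  have hEmeas : ∀ T, MeasurableSet (E T) := by
    intro T
    exact MeasurableSet.biInter (Finset.range n).countable_toSet
      (fun i _ => (h.meas i) (measurableSet_singleton _))
  have hEmeasure : ∀ T, P (E T) =
      ENNReal.ofReal (∏ i ∈ Finset.range n, (if i ∈ T then p else 1 - p)) := by
    intro T
    rw [hE]
    rw [h.indep.meas_biInter (fun i _ => ⟨{if i ∈ T then 1 else 0}, measurableSet_singleton _, rfl⟩)]
    rw [ENNReal.ofReal_prod_of_nonneg (fun i _ => by split_ifs <;> [exact hp.1; linarith [hp.2]])]
    refine Finset.prod_congr rfl fun i _ => ?_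
    by_cases hi : i ∈ T <;> simp [hi, h.bern i, h0 i]
  -- the set decomposition
  have hset : {ω | S X n ω ≤ k} =
      ⋃ T ∈ (Finset.range n).powerset.filter (fun T => T.card ≤ k), E T := by
    ext ω
    simp only [Set.mem_setOf_eq, Set.mem_iUnion, Finset.mem_filter, Finset.mem_powerset,
      hE, Set.mem_iInter, Set.mem_preimage, Set.mem_singleton_iff]
    constructor
    · intro hS
      refine ⟨(Finset.range n).filter (fun i => X i ω = 1), ⟨Finset.filter_subset _ _, ?_⟩, ?_⟩
      · have hcard : ((Finset.range n).filter (fun i => X i ω = 1)).card = S X n ω := by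
          rw [Finset.card_filter, S]
          refine Finset.sum_congr rfl fun i _ => ?_
          have := h.bdd i ω
          split_ifs with hh <;> omega
        omega
      · intro i hi
        have := h.bdd i ω
        by_cases hx : X i ω = 1 <;> simp [Finset.mem_filter, hi, hx] <;> omega
    · rintro ⟨T, ⟨hTsub, hTcard⟩, hTω⟩
      have : S X n ω = T.card := by
        rw [S]
        have : ∀ i ∈ Finset.range n, X i ω = if i ∈ T then 1 else 0 := hTω
        rw [Finset.sum_congr rfl this, Finset.sum_ite_mem,
          Finset.inter_eq_right.mpr hTsub, Finset.card_eq_sum_ones]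
      omega
  -- disjointness
  have hdisj : Set.PairwiseDisjoint
      ↑((Finset.range n).powerset.filter (fun T => T.card ≤ k)) E := by
    intro T hT T' hT' hne
    simp only [Finset.coe_filter, Set.mem_setOf_eq, Finset.mem_powerset] at hT hT'
    rw [Function.onFun, Set.disjoint_left]
    intro ω hω hω'
    apply hne
    have key : ∀ i ∈ Finset.range n, (i ∈ T ↔ i ∈ T') := by
      intro i hi
      have h1 : X i ω = if i ∈ T then 1 else 0 := by
        have := hω; rw [hE] at this; simp only [Set.mem_iInter, Set.mem_preimage,
          Set.mem_singleton_iff] at this; exact this i hi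
      have h2 : X i ω = if i ∈ T' then 1 else 0 := by
        have := hω'; rw [hE] at this; simp only [Set.mem_iInter, Set.mem_preimage,
          Set.mem_singleton_iff] at this; exact this i hi
      by_cases hiT : i ∈ T <;> by_cases hiT' : i ∈ T' <;> simp [hiT, hiT'] at h1 h2 ⊢ <;> omega
    ext i
    constructor
    · intro hi; exact (key i (Finset.mem_range.mpr (by
        have := hT.1 hi; exact Finset.mem_range.mp this))).mp hi
    · intro hi; exact (key i (Finset.mem_range.mpr (by
        have := hT'.1 hi; exact Finset.mem_range.mp this))).mpr hi
  rw [hset, measure_biUnion_finset hdisj (fun T _ => hEmeas T),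
    ENNReal.ofReal_sum_of_nonneg (fun T _ => Finset.prod_nonneg
      (fun i _ => by split_ifs <;> [exact hp.1; linarith [hp.2]]))]
  exact Finset.sum_congr rfl fun T _ => hEmeasure T


theorem statement_15 {Ω : Type*} [MeasurableSpace Ω]
    (α : ℝ) (hα : α ∈ Set.Ioo (0:ℝ) 1)
    (P : ℝ → Measure Ω) (X : ℕ → Ω → ℕ)
    (hBern : ∀ p ∈ Set.Icc (0:ℝ) 1, IsBernoulliSeq (P p) p X) :
    ∀ n : ℕ, 1 ≤ n →
      ENNReal.ofReal (1 / 2) ≤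
        ⨆ p ∈ Set.Icc (0:ℝ) 1,
          if p ≤ α then P p {ω | α < (S X n ω : ℝ) / n}
          else P p {ω | (S X n ω : ℝ) / n ≤ α} := by
  intro n hn
  have hn0 : (0:ℝ) < n := by exact_mod_cast hn
  set k := ⌊α * n⌋₊ with hk
  have hsetA : {ω : Ω | (S X n ω : ℝ) / n ≤ α} = {ω : Ω | S X n ω ≤ k} := by
    ext ω
    rw [Set.mem_setOf_eq, Set.mem_setOf_eq, div_le_iff₀ hn0, hk,
      ← Nat.le_floor_iff (mul_nonneg hα.1.le (Nat.cast_nonneg n))]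
  have hαmem : α ∈ Set.Icc (0:ℝ) 1 := ⟨hα.1.le, hα.2.le⟩
  haveI := (hBern α hαmem).isProb
  set g : ℝ → ℝ := fun p => ∑ T ∈ (Finset.range n).powerset.filter (fun T => T.card ≤ k),
      ∏ i ∈ Finset.range n, (if i ∈ T then p else 1 - p) with hgdef
  have hg : Continuous g := by
    apply continuous_finset_sum
    intro T _
    apply continuous_finset_prod
    intro i _
    by_cases hi : i ∈ T <;> simp only [hi, if_true, if_false] <;> fun_prop
  have hPA : ∀ p ∈ Set.Icc (0:ℝ) 1, P p {ω | S X n ω ≤ k} = ENNReal.ofReal (g p) :=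
    fun p hp => binom_cdf (P p) p X (hBern p hp) hp n k
  by_cases hc : ENNReal.ofReal (1/2) ≤ P α {ω | α < (S X n ω : ℝ) / n}
  · refine hc.trans (le_trans (le_of_eq ?_) (le_biSup
      (fun p => if p ≤ α then P p {ω | α < (S X n ω : ℝ) / n}
        else P p {ω | (S X n ω : ℝ) / n ≤ α}) hαmem))
    beta_reduce
    rw [if_pos le_rfl]
  · push_neg at hc
    have hsetB : {ω : Ω | α < (S X n ω : ℝ) / n} = {ω : Ω | S X n ω ≤ k}ᶜ := by
      rw [← hsetA]
      ext ω
      simp [not_le]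
    have hmeasA : MeasurableSet {ω : Ω | S X n ω ≤ k} := by
      have : Measurable (fun ω => S X n ω) :=
        Finset.measurable_sum _ (fun i _ => (hBern α hαmem).meas i)
      exact this measurableSet_Iic
    have hcompl : P α {ω : Ω | α < (S X n ω : ℝ) / n} =
        1 - P α {ω : Ω | S X n ω ≤ k} := by
      rw [hsetB, measure_compl hmeasA (measure_ne_top _ _), measure_univ]
    have hhalf : (1 : ℝ≥0∞) - ENNReal.ofReal (1/2) = ENNReal.ofReal (1/2) := by
      rw [← ENNReal.ofReal_one, ← ENNReal.ofReal_sub _ (by norm_num)]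
      norm_num
    have hgt : ENNReal.ofReal (1/2) < P α {ω : Ω | S X n ω ≤ k} := by
      by_contra hle
      push_neg at hle
      have h2 : (1:ℝ≥0∞) - P α {ω : Ω | S X n ω ≤ k} ≥ 1 - ENNReal.ofReal (1/2) :=
        tsub_le_tsub_left hle 1
      rw [hhalf] at h2
      rw [hcompl] at hc
      exact absurd h2 (not_le.mpr hc)
    rw [hPA α hαmem] at hgt
    have hgα : 1/2 < g α :=
      (ENNReal.ofReal_lt_ofReal_iff_of_nonneg (by norm_num)).mp hgt
    obtain ⟨δ, hδpos, hδ⟩ := Metric.continuousAt_iff.mp hg.continuousAt (g α - 1/2)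
      (by linarith)
    set p' : ℝ := min (α + δ/2) ((α+1)/2) with hp'def
    have hp'α : α < p' := lt_min (by linarith) (by linarith [hα.2])
    have hp'1 : p' ≤ 1 := le_trans (min_le_right _ _) (by linarith [hα.2])
    have hp'mem : p' ∈ Set.Icc (0:ℝ) 1 := ⟨le_trans hα.1.le hp'α.le, hp'1⟩
    have hdist : dist p' α < δ := by
      rw [Real.dist_eq, abs_of_nonneg (by linarith)]
      have : p' ≤ α + δ/2 := min_le_left _ _
      linarith
    have hgp' : 1/2 < g p' := by
      have h3 := hδ hdist
      rw [Real.dist_eq] at h3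
      have := abs_lt.mp h3
      linarith [this.1]
    refine le_trans ?_ (le_biSup
      (fun p => if p ≤ α then P p {ω | α < (S X n ω : ℝ) / n}
        else P p {ω | (S X n ω : ℝ) / n ≤ α}) hp'mem)
    beta_reduce
    rw [if_neg (not_le.mpr hp'α), hsetA, hPA p' hp'mem]
    exact ENNReal.ofReal_le_ofReal hgp'.le


end SeqMC
end
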